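/- Let n ≥ 3 be an odd integer and η = e^{2π√−1/n}. Then for every l ∈ {1, …, n−1}, Σ_{k=0}^{n−1} η^{lk}/(1 + η^k) = (n/2)·(−1)^{l−1}. -/

import Mathlib

/-- for odd `n ≥ 3`, `η = e^{2π√-1/n}` and `l ∈ {1,…,n-1}`,
`Σ_{k=0}^{n-1} η^{lk}/(1+η^k) = (n/2)·(-1)^{l-1}`. -/
theorem sum_pow_div_one_add_root (n : ℕ) (hn : 3 ≤ n) (hodd : Odd n) (η : ℂ)
    (hη : η = Complex.exp (2 * Real.pi * Complex.I / n))
    (l : ℕ) (hl : l ∈ Finset.Icc 1 (n - 1)) :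
    ∑ k ∈ Finset.range n, η ^ (l * k) / (1 + η ^ k) =
      (n : ℂ) / 2 * (-1 : ℂ) ^ (l - 1) := by
  have hn0 : n ≠ 0 := by omega
  have hprim : IsPrimitiveRoot η n := hη ▸ Complex.isPrimitiveRoot_exp n hn0
  have hηn : η ^ n = 1 := hprim.pow_eq_one
  -- the denominators do not vanish since `n` is odd
  have hne : ∀ k : ℕ, 1 + η ^ k ≠ 0 := by
    intro k h
    have hk : η ^ k = -1 := by linear_combination h
    have h2 : η ^ (2 * k) = 1 := by
      rw [two_mul, pow_add, hk]; ring
    have hdvd : n ∣ 2 * k := (hprim.pow_eq_one_iff_dvd _).mp h2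
    have hcop : Nat.Coprime n 2 := hodd.coprime_two_right
    have hdk : n ∣ k := hcop.dvd_of_dvd_mul_left hdvd
    have : η ^ k = 1 := (hprim.pow_eq_one_iff_dvd _).mpr hdk
    rw [this] at hk
    norm_num at hk
  -- geometric sums vanish
  have hgeom : ∀ m : ℕ, ¬ n ∣ m → ∑ k ∈ Finset.range n, η ^ (m * k) = 0 := by
    intro m hm
    have hζ : η ^ m ≠ 1 := fun h => hm ((hprim.pow_eq_one_iff_dvd m).mp h)
    have h1 : (η ^ m) ^ n = 1 := by
      rw [← pow_mul, mul_comm, pow_mul, hηn, one_pow]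
    calc ∑ k ∈ Finset.range n, η ^ (m * k)
        = ∑ k ∈ Finset.range n, (η ^ m) ^ k := by
          refine Finset.sum_congr rfl fun k _ => ?_; rw [pow_mul]
      _ = ((η ^ m) ^ n - 1) / (η ^ m - 1) := geom_sum_eq hζ n
      _ = 0 := by rw [h1]; simp
  -- the key recurrence
  have key : ∀ m : ℕ,
      (∑ k ∈ Finset.range n, η ^ (m * k) / (1 + η ^ k)) +
      (∑ k ∈ Finset.range n, η ^ ((m + 1) * k) / (1 + η ^ k)) =
      ∑ k ∈ Finset.range n, η ^ (m * k) := by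
    intro m
    rw [← Finset.sum_add_distrib]
    refine Finset.sum_congr rfl fun k _ => ?_
    rw [← add_div, div_eq_iff (hne k)]
    rw [show (m + 1) * k = m * k + k by ring, pow_add]
    ring
  -- S 0 = S 1 by reindexing
  have hsym : (∑ k ∈ Finset.range n, η ^ (1 * k) / (1 + η ^ k)) =
      ∑ k ∈ Finset.range n, η ^ (0 * k) / (1 + η ^ k) := by
    have h1 : ∀ k ∈ Finset.range n,
        η ^ (1 * (n - 1 - k)) / (1 + η ^ (n - 1 - k)) = 1 / (1 + η ^ (k + 1)) := by
      intro k hk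
      have hk' : k < n := Finset.mem_range.mp hk
      have hmul : η ^ (n - 1 - k) * η ^ (k + 1) = 1 := by
        rw [← pow_add, show n - 1 - k + (k + 1) = n by omega, hηn]
      rw [one_mul, div_eq_div_iff (hne _) (hne _)]
      linear_combination hmul
    calc (∑ k ∈ Finset.range n, η ^ (1 * k) / (1 + η ^ k))
        = ∑ k ∈ Finset.range n, η ^ (1 * (n - 1 - k)) / (1 + η ^ (n - 1 - k)) := by
          exact (Finset.sum_range_reflect (fun k => η ^ (1 * k) / (1 + η ^ k)) n).symm
      _ = ∑ k ∈ Finset.range n, 1 / (1 + η ^ (k + 1)) := Finset.sum_congr rfl h1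
      _ = (∑ k ∈ Finset.range (n + 1), 1 / (1 + η ^ k)) - 1 / (1 + η ^ 0) := by
          rw [Finset.sum_range_succ']; ring
      _ = ∑ k ∈ Finset.range n, 1 / (1 + η ^ k) := by
          rw [Finset.sum_range_succ, hηn]; simp
      _ = ∑ k ∈ Finset.range n, η ^ (0 * k) / (1 + η ^ k) := by simp
  -- base case : S 1 = n / 2
  have hbase : (∑ k ∈ Finset.range n, η ^ (1 * k) / (1 + η ^ k)) = (n : ℂ) / 2 := by
    have h0 := key 0
    have hsum0 : ∑ k ∈ Finset.range n, η ^ (0 * k) = (n : ℂ) := by simp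
    rw [hsum0, hsym] at h0
    have : (2 : ℂ) * (∑ k ∈ Finset.range n, η ^ (0 * k) / (1 + η ^ k)) = n := by
      linear_combination h0
    rw [hsym]
    linear_combination this / 2
  -- induction
  have main : ∀ m : ℕ, 1 ≤ m → m ≤ n - 1 →
      (∑ k ∈ Finset.range n, η ^ (m * k) / (1 + η ^ k)) =
        (n : ℂ) / 2 * (-1 : ℂ) ^ (m - 1) := by
    intro m
    induction m with
    | zero => omega
    | succ p ih =>
      intro _ hle
      by_cases hp : p = 0
      · subst hp; simpa using hbase
      · have h1p : 1 ≤ p := by omega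
        have hS := ih h1p (by omega)
        have hnd : ¬ n ∣ p := by
          intro h
          have := Nat.le_of_dvd (by omega) h
          omega
        have hrec := key p
        rw [hgeom p hnd, hS] at hrec
        have hpow : (-1 : ℂ) ^ (p + 1 - 1) = -(-1 : ℂ) ^ (p - 1) := by
          rw [show p + 1 - 1 = (p - 1) + 1 by omega, pow_succ]
          ring
        rw [hpow]
        linear_combination hrec
  rw [Finset.mem_Icc] at hl
  exact main l hl.1 hl.2
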